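/- Let a, b, c, n be integers with a ≠ 0 and n ≥ 2, and let q(x) = a·x² + b·x + c. IQF is valid for q(x) ≡ 0 (mod n) if and only if for every integer x, n divides 4·a·q(x) exactly when n divides q(x). -/
import Mathlib


/-- The intermediate form of the quadratic formula (IQF) is valid for
`a·x² + b·x + c ≡ 0 (mod n)`. -/
def IQF (a b c n : ℤ) : Prop :=
  ∀ x : ℤ, n ∣ a * x ^ 2 + b * x + c ↔
    ∃ s : ℤ, n ∣ s ^ 2 - (b ^ 2 - 4 * a * c) ∧ n ∣ 2 * a * x - (-b + s)

/-- Statement (3.1) of the paper. -/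
theorem iqf_iff_four_a (a b c n : ℤ) (ha : a ≠ 0) (hn : 2 ≤ n) :
    IQF a b c n ↔
      ∀ x : ℤ, n ∣ 4 * a * (a * x ^ 2 + b * x + c) ↔ n ∣ a * x ^ 2 + b * x + c := by
  have key : ∀ x : ℤ, (2 * a * x + b) ^ 2 - (b ^ 2 - 4 * a * c)
      = 4 * a * (a * x ^ 2 + b * x + c) := by intro x; ring
  constructor
  · intro h x
    constructor
    · intro hd
      rw [h x]
      exact ⟨2 * a * x + b, by rw [key x]; exact hd, by ring_nf; exact dvd_zero n⟩
    · intro hd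
      exact Dvd.dvd.mul_left hd (4 * a)
  · intro h x
    constructor
    · intro hd
      refine ⟨2 * a * x + b, ?_, by ring_nf; exact dvd_zero n⟩
      rw [key x]
      exact Dvd.dvd.mul_left hd (4 * a)
    · rintro ⟨s, hs1, hs2⟩
      rw [← h x, ← key x]
      have h3 : n ∣ (2 * a * x + b) ^ 2 - s ^ 2 := by
        have : (2 * a * x + b) ^ 2 - s ^ 2
            = (2 * a * x - (-b + s)) * (2 * a * x + b + s) := by ring
        rw [this]
        exact hs2.mul_right _
      have := dvd_add h3 hs1
      simpa using this
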